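/- For any Hermitian traceless operators M, N on a d-dimensional complex Hilbert space, and any complete set of d+1 mutually unbiased bases {|ψ^a_b⟩ : a = 0,…,d, b = 0,…,d−1}, the sum over all a, b of ⟨ψ^a_b| M |ψ^a_b⟩⟨ψ^a_b| N |ψ^a_b⟩ equals tr(MN). -/

import Mathlib

open Matrix BigOperators Kronecker Finset

namespace MUBAux

variable {d : ℕ}

noncomputable def P (v : Fin d → ℂ) : Matrix (Fin d) (Fin d) ℂ := vecMulVec v (star v)

lemma trace_mul_P (M : Matrix (Fin d) (Fin d) ℂ) (v : Fin d → ℂ) :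
    (M * P v).trace = star v ⬝ᵥ (M *ᵥ v) := by
  simp only [Matrix.trace, Matrix.diag, Matrix.mul_apply, P, vecMulVec_apply,
    dotProduct, mulVec, Pi.star_apply]
  refine Finset.sum_congr rfl fun i _ => ?_
  rw [Finset.mul_sum]
  refine Finset.sum_congr rfl fun j _ => by ring

lemma trace_P_mul_P (v w : Fin d → ℂ) :
    (P v * P w).trace = ((‖star v ⬝ᵥ w‖)^2 : ℝ) := by
  have h : (P v * P w).trace = (star v ⬝ᵥ w) * star (star v ⬝ᵥ w) := by
    simp only [Matrix.trace, Matrix.diag, Matrix.mul_apply, P, vecMulVec_apply,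
      dotProduct, Pi.star_apply, star_sum, star_mul', star_star, Finset.sum_mul_sum]
    rw [Finset.sum_comm]
    refine Finset.sum_congr rfl fun i _ => Finset.sum_congr rfl fun j _ => by ring
  rw [h, Complex.star_def, Complex.mul_conj, ← Complex.sq_norm]

lemma P_hermitian (v : Fin d → ℂ) : (P v)ᴴ = P v := by
  ext i j
  simp [P, conjTranspose_apply, vecMulVec_apply, mul_comm]

lemma P_star (v : Fin d → ℂ) (i j : Fin d) : star (P v j i) = P v i j := by
  simp [P, vecMulVec_apply, star_mul', mul_comm]

lemma kron_herm (v : Fin d → ℂ) : ((P v) ⊗ₖ (P v))ᴴ = (P v) ⊗ₖ (P v) := by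
  ext ⟨i, j⟩ ⟨k, l⟩
  simp only [conjTranspose_apply, kroneckerMap_apply, star_mul', P_star]

def swap (d : ℕ) : Matrix (Fin d × Fin d) (Fin d × Fin d) ℂ :=
  Matrix.of fun p q => if p.1 = q.2 ∧ p.2 = q.1 then 1 else 0

lemma swap_herm : (swap d)ᴴ = swap d := by
  ext ⟨i, j⟩ ⟨k, l⟩
  simp only [conjTranspose_apply, swap, of_apply, apply_ite (star (R := ℂ)), star_one, star_zero]
  by_cases h1 : i = l <;> by_cases h2 : j = k <;> simp [h1, h2, eq_comm]

lemma trace_swap : (swap d).trace = (d : ℂ) := by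
  have h : ∀ i j : Fin d, (if i = j ∧ j = i then (1:ℂ) else 0) = if i = j then 1 else 0 := by
    intro i j; by_cases h : i = j <;> simp [h]
  simp only [Matrix.trace, Matrix.diag, swap, of_apply, Fintype.sum_prod_type, h,
    Finset.sum_ite_eq, Finset.mem_univ, if_true]
  simp

lemma swap_mul_swap : swap d * swap d = 1 := by
  ext ⟨i, j⟩ ⟨k, l⟩
  simp only [Matrix.mul_apply, swap, of_apply, Fintype.sum_prod_type, one_apply,
    ite_and, mul_ite, mul_one, mul_zero, Finset.sum_ite_eq, Finset.mem_univ, if_true,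
    Prod.mk.injEq]
  by_cases h1 : i = k <;> by_cases h2 : j = l <;>
    simp [h1, h2, Finset.sum_ite_eq', Finset.sum_ite_eq, eq_comm]

lemma trace_kron_mul_swap (X Y : Matrix (Fin d) (Fin d) ℂ) :
    ((X ⊗ₖ Y) * swap d).trace = (X * Y).trace := by
  simp only [Matrix.trace, Matrix.diag, Matrix.mul_apply, kroneckerMap_apply, swap, of_apply,
    Fintype.sum_prod_type, ite_and, mul_ite, mul_one, mul_zero]
  refine Finset.sum_congr rfl fun i _ => ?_
  simp [Finset.sum_ite_eq, Finset.sum_ite_eq', mul_comm]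

lemma eq_zero_of_trace (A : Matrix (Fin d × Fin d) (Fin d × Fin d) ℂ)
    (h : (Aᴴ * A).trace = 0) : A = 0 := by
  have h2 : ∑ j, ∑ i, Complex.normSq (A i j) = 0 := by
    have := congrArg Complex.re h
    simpa [Matrix.trace, Matrix.diag, Matrix.mul_apply, conjTranspose_apply,
      Complex.normSq_eq_conj_mul_self, Complex.re_sum, Complex.normSq_apply] using this
  ext i j
  have h3 := (Finset.sum_eq_zero_iff_of_nonneg (fun j _ =>
    Finset.sum_nonneg fun i _ => Complex.normSq_nonneg (A i j))).mp h2 j (Finset.mem_univ j)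
  have h4 := (Finset.sum_eq_zero_iff_of_nonneg (fun i _ => Complex.normSq_nonneg (A i j))).mp
    h3 i (Finset.mem_univ i)
  simpa using Complex.normSq_eq_zero.mp h4

end MUBAux
theorem mub_sum_eq_trace_mul_of_traceless
    (d : ℕ) (ψ : Fin (d + 1) → Fin d → (Fin d → ℂ))
    (hMUB : ∀ a b a' b', ‖star (ψ a b) ⬝ᵥ ψ a' b'‖ =
      if a = a' ∧ b = b' then 1 else if a = a' then 0 else 1 / Real.sqrt d)
    (M N : Matrix (Fin d) (Fin d) ℂ)
    (hM : M.IsHermitian) (hN : N.IsHermitian)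
    (hMt : M.trace = 0) (hNt : N.trace = 0) :
    ∑ a : Fin (d + 1), ∑ b : Fin d,
      (star (ψ a b) ⬝ᵥ (M *ᵥ ψ a b)) * (star (ψ a b) ⬝ᵥ (N *ᵥ ψ a b))
      = (M * N).trace := by
  rcases Nat.eq_zero_or_pos d with rfl | hd
  · simp [Matrix.trace]
  have hd0 : (d : ℂ) ≠ 0 := Nat.cast_ne_zero.mpr hd.ne'
  -- each ψ a b is a unit vector
  have hnorm : ∀ a b, star (ψ a b) ⬝ᵥ ψ a b = 1 := by
    intro a b
    have h1 : star (ψ a b) ⬝ᵥ ψ a b = ((∑ i, Complex.normSq (ψ a b i) : ℝ) : ℂ) := by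
      push_cast
      simp [dotProduct, Complex.normSq_eq_conj_mul_self]
    have h2 := hMUB a b a b
    rw [if_pos ⟨rfl, rfl⟩, h1, Complex.norm_real, Real.norm_eq_abs,
      abs_of_nonneg (Finset.sum_nonneg fun i _ => Complex.normSq_nonneg _)] at h2
    rw [h1, h2]
    norm_num
  -- trace of products of the rank-one projections
  have ht : ∀ a b a' b', (MUBAux.P (ψ a b) * MUBAux.P (ψ a' b')).trace =
      if a = a' ∧ b = b' then 1 else if a = a' then 0 else ((d : ℂ))⁻¹ := by
    intro a b a' b'
    rw [MUBAux.trace_P_mul_P, hMUB]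
    split_ifs with h1 h2
    · norm_num
    · norm_num
    · rw [div_pow, one_pow, Real.sq_sqrt (Nat.cast_nonneg d)]
      push_cast
      rw [one_div]
  have htrP : ∀ a b, (MUBAux.P (ψ a b)).trace = 1 := by
    intro a b
    have h := MUBAux.trace_mul_P (1 : Matrix (Fin d) (Fin d) ℂ) (ψ a b)
    rw [one_mul] at h
    simpa [hnorm a b] using h
  set S : Matrix (Fin d × Fin d) (Fin d × Fin d) ℂ :=
    ∑ a : Fin (d + 1), ∑ b : Fin d, (MUBAux.P (ψ a b)) ⊗ₖ (MUBAux.P (ψ a b)) with hSdef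
  have hSherm : Sᴴ = S := by
    rw [hSdef]
    rw [Matrix.conjTranspose_sum]
    refine Finset.sum_congr rfl fun a _ => ?_
    rw [Matrix.conjTranspose_sum]
    refine Finset.sum_congr rfl fun b _ => ?_
    exact MUBAux.kron_herm (ψ a b)
  -- inner sum of squared overlaps
  have hinner : ∀ (a : Fin (d + 1)) (b : Fin d),
      (∑ a' : Fin (d + 1), ∑ b' : Fin d,
        ((if a = a' ∧ b = b' then (1 : ℂ) else if a = a' then 0 else (d : ℂ)⁻¹) *
         (if a = a' ∧ b = b' then (1 : ℂ) else if a = a' then 0 else (d : ℂ)⁻¹))) = 2 := by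
    intro a b
    have hsplit : ∀ (a' : Fin (d + 1)) (b' : Fin d),
        ((if a = a' ∧ b = b' then (1 : ℂ) else if a = a' then 0 else (d : ℂ)⁻¹) *
         (if a = a' ∧ b = b' then (1 : ℂ) else if a = a' then 0 else (d : ℂ)⁻¹)) =
        (if a = a' then (if b = b' then (1 : ℂ) else 0) else 0) +
        (if a = a' then 0 else (d : ℂ)⁻¹ * (d : ℂ)⁻¹) := by
      intro a' b'
      by_cases h1 : a = a' <;> by_cases h2 : b = b' <;> simp [h1, h2]
    simp only [hsplit, Finset.sum_add_distrib, Finset.sum_ite_irrel, mul_zero,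
      Finset.sum_ite_eq, Finset.mem_univ, if_true, Finset.sum_const, Finset.card_univ,
      Fintype.card_fin, nsmul_eq_mul]
    have h1 : (∑ a' : Fin (d + 1), if a = a' then (0 : ℂ) else (d : ℂ) * ((d : ℂ)⁻¹ * (d : ℂ)⁻¹))
        = (d : ℂ) * ((d : ℂ) * ((d : ℂ)⁻¹ * (d : ℂ)⁻¹)) := by
      have : ∀ a' : Fin (d + 1), (if a = a' then (0 : ℂ) else (d : ℂ) * ((d : ℂ)⁻¹ * (d : ℂ)⁻¹))
          = (d : ℂ) * ((d : ℂ)⁻¹ * (d : ℂ)⁻¹)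
            - (if a = a' then (d : ℂ) * ((d : ℂ)⁻¹ * (d : ℂ)⁻¹) else 0) := by
        intro a'; by_cases h : a = a' <;> simp [h]
      simp only [this, Finset.sum_sub_distrib, Finset.sum_ite_eq, Finset.mem_univ, if_true,
        Finset.sum_const, Finset.card_univ, Fintype.card_fin, nsmul_eq_mul]
      push_cast
      ring
    rw [h1]
    field_simp
    ring
  -- the 2-design identity
  have hSS : (S * S).trace = 2 * ((d : ℂ) + 1) * (d : ℂ) := by
    rw [hSdef]
    rw [Finset.sum_mul]
    rw [Matrix.trace_sum]
    calc (∑ a : Fin (d + 1), ((∑ b : Fin d, MUBAux.P (ψ a b) ⊗ₖ MUBAux.P (ψ a b)) *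
            ∑ a' : Fin (d + 1), ∑ b' : Fin d, MUBAux.P (ψ a' b') ⊗ₖ MUBAux.P (ψ a' b')).trace)
        = ∑ a : Fin (d + 1), ∑ b : Fin d, ∑ a' : Fin (d + 1), ∑ b' : Fin d,
            ((MUBAux.P (ψ a b) * MUBAux.P (ψ a' b')).trace *
             (MUBAux.P (ψ a b) * MUBAux.P (ψ a' b')).trace) := by
          refine Finset.sum_congr rfl fun a _ => ?_
          rw [Finset.sum_mul, Matrix.trace_sum]
          refine Finset.sum_congr rfl fun b _ => ?_
          rw [Finset.mul_sum, Matrix.trace_sum]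
          refine Finset.sum_congr rfl fun a' _ => ?_
          rw [Finset.mul_sum, Matrix.trace_sum]
          refine Finset.sum_congr rfl fun b' _ => ?_
          rw [← Matrix.mul_kronecker_mul, Matrix.trace_kronecker]
      _ = ∑ a : Fin (d + 1), ∑ b : Fin d, (2 : ℂ) := by
          refine Finset.sum_congr rfl fun a _ => Finset.sum_congr rfl fun b _ => ?_
          simp only [ht]
          exact hinner a b
      _ = 2 * ((d : ℂ) + 1) * (d : ℂ) := by
          simp only [Finset.sum_const, Finset.card_univ, Fintype.card_fin, nsmul_eq_mul]
          push_cast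
          ring
  have hStr : S.trace = ((d : ℂ) + 1) * (d : ℂ) := by
    rw [hSdef, Matrix.trace_sum]
    simp only [Matrix.trace_sum, Matrix.trace_kronecker, htrP, mul_one, Finset.sum_const,
      Finset.card_univ, Fintype.card_fin, nsmul_eq_mul]
    push_cast
    ring
  have hSsw : (S * MUBAux.swap d).trace = ((d : ℂ) + 1) * (d : ℂ) := by
    rw [hSdef, Finset.sum_mul, Matrix.trace_sum]
    have : ∀ a : Fin (d + 1), ((∑ b : Fin d, MUBAux.P (ψ a b) ⊗ₖ MUBAux.P (ψ a b)) *
        MUBAux.swap d).trace = (d : ℂ) := by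
      intro a
      rw [Finset.sum_mul, Matrix.trace_sum]
      have : ∀ b : Fin d, ((MUBAux.P (ψ a b) ⊗ₖ MUBAux.P (ψ a b)) * MUBAux.swap d).trace
          = 1 := by
        intro b
        rw [MUBAux.trace_kron_mul_swap, ht]
        simp
      simp [this]
    simp only [this, Finset.sum_const, Finset.card_univ, Fintype.card_fin, nsmul_eq_mul]
    push_cast
    ring
  have hkey : S = 1 + MUBAux.swap d := by
    have hBherm : ((1 : Matrix (Fin d × Fin d) (Fin d × Fin d) ℂ) + MUBAux.swap d)ᴴ
        = 1 + MUBAux.swap d := by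
      rw [conjTranspose_add, MUBAux.swap_herm, conjTranspose_one]
    have h0 : ((S - (1 + MUBAux.swap d))ᴴ * (S - (1 + MUBAux.swap d))).trace = 0 := by
      rw [conjTranspose_sub, hSherm, hBherm, sub_mul, mul_sub, mul_sub,
        Matrix.trace_sub, Matrix.trace_sub, Matrix.trace_sub,
        Matrix.trace_mul_comm (1 + MUBAux.swap d) S]
      have e1 : (S * (1 + MUBAux.swap d)).trace = 2 * ((d : ℂ) + 1) * (d : ℂ) := by
        rw [mul_add, Matrix.trace_add, mul_one, hStr, hSsw]
        ring
      have e2 : (((1 : Matrix (Fin d × Fin d) (Fin d × Fin d) ℂ) + MUBAux.swap d) *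
          (1 + MUBAux.swap d)).trace = 2 * ((d : ℂ) + 1) * (d : ℂ) := by
        have hexp : ((1 : Matrix (Fin d × Fin d) (Fin d × Fin d) ℂ) + MUBAux.swap d) *
            (1 + MUBAux.swap d) = 1 + MUBAux.swap d + MUBAux.swap d +
            MUBAux.swap d * MUBAux.swap d := by noncomm_ring
        rw [hexp, MUBAux.swap_mul_swap, Matrix.trace_add, Matrix.trace_add,
          Matrix.trace_add, Matrix.trace_one, MUBAux.trace_swap]
        simp only [Fintype.card_prod, Fintype.card_fin]
        push_cast
        ring
      rw [hSS, e1, e2]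
      ring
    have := MUBAux.eq_zero_of_trace _ h0
    exact sub_eq_zero.mp this
  -- conclude
  calc ∑ a : Fin (d + 1), ∑ b : Fin d,
        (star (ψ a b) ⬝ᵥ (M *ᵥ ψ a b)) * (star (ψ a b) ⬝ᵥ (N *ᵥ ψ a b))
      = ∑ a : Fin (d + 1), ∑ b : Fin d,
          ((M * MUBAux.P (ψ a b)).trace * (N * MUBAux.P (ψ a b)).trace) := by
        simp only [MUBAux.trace_mul_P]
    _ = ((M ⊗ₖ N) * S).trace := by
        rw [hSdef, Finset.mul_sum, Matrix.trace_sum]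
        refine Finset.sum_congr rfl fun a _ => ?_
        rw [Finset.mul_sum, Matrix.trace_sum]
        refine Finset.sum_congr rfl fun b _ => ?_
        rw [← Matrix.mul_kronecker_mul, Matrix.trace_kronecker]
    _ = (M * N).trace := by
        rw [hkey, mul_add, Matrix.trace_add, mul_one, Matrix.trace_kronecker,
          MUBAux.trace_kron_mul_swap, hMt]
        ring
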